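/- Every nontrivial finite distributive lattice L of order dimension n admits a cover-preserving {0,1}-lattice embedding into a direct product of n nontrivial finite chains of the same length as L. -/

import Mathlib

/-- The order dimension of a poset: the least `n` such that it order-embeds into a
product of `n` chains. -/
noncomputable def orderDim (P : Type) [Preorder P] : ℕ :=
  sInf {n : ℕ | Nonempty (P ↪o (Fin n → ℕ))}

/-- The length of a finite lattice: the greatest `n` such that there is a strict
chain with `n + 1` elements. -/
noncomputable def latLength (L : Type) [Preorder L] : ℕ :=
  sSup {n : ℕ | ∃ f : Fin (n + 1) → L, StrictMono f}


open Finset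
set_option linter.unusedSectionVars false
set_option linter.unusedVariables false
attribute [local instance] Classical.propDecidable

section Aux
variable {L : Type} [DistribLattice L] [Fintype L] [BoundedOrder L]

/-- The finset of sup-irreducible (nonzero join-irreducible) elements. -/
noncomputable def JJ (L : Type) [Lattice L] [Fintype L] : Finset L :=
  Finset.univ.filter (fun p => SupIrred p)

lemma mem_JJ {p : L} : p ∈ JJ L ↔ SupIrred p := by simp [JJ]

lemma sup_JJ_below (x : L) : ((JJ L).filter (· ≤ x)).sup id = x := by
  obtain ⟨s, hs, hirr⟩ := exists_supIrred_decomposition x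
  apply le_antisymm
  · exact Finset.sup_le fun p hp => (Finset.mem_filter.1 hp).2
  · rw [← hs]
    exact Finset.sup_le fun p hp => Finset.le_sup (f := id)
      (Finset.mem_filter.2 ⟨mem_JJ.2 (hirr hp), hs ▸ Finset.le_sup (f := id) hp⟩)

lemma le_iff_JJ {x y : L} : x ≤ y ↔ ∀ p ∈ JJ L, p ≤ x → p ≤ y := by
  refine ⟨fun h p _ hpx => hpx.trans h, fun h => ?_⟩
  conv_lhs => rw [← sup_JJ_below x]
  exact Finset.sup_le fun p hp => h p (Finset.mem_filter.1 hp).1 (Finset.mem_filter.1 hp).2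

/-- The largest element not above `p`, for `p` sup-irreducible. -/
noncomputable def MM (p : L) : L := (Finset.univ.filter (fun x => ¬ p ≤ x)).sup id

lemma not_le_MM {p : L} (hp : p ∈ JJ L) : ¬ p ≤ MM p := by
  intro h
  obtain ⟨x, hx, hpx⟩ := ((mem_JJ.1 hp).supPrime.le_finset_sup).1 h
  exact (Finset.mem_filter.1 hx).2 hpx

lemma le_MM {p x : L} (h : ¬ p ≤ x) : x ≤ MM p :=
  Finset.le_sup (f := id) (Finset.mem_filter.2 ⟨Finset.mem_univ _, h⟩)

lemma JJ_nonempty [Nontrivial L] : (JJ L).Nonempty := by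
  by_contra h
  rw [Finset.not_nonempty_iff_eq_empty] at h
  have := sup_JJ_below (⊤ : L)
  rw [h] at this
  simp at this


noncomputable def rk (x : L) : ℕ := ((JJ L).filter (· ≤ x)).card

lemma rk_strictMono : StrictMono (rk (L := L)) := by
  intro x y hxy
  apply Finset.card_lt_card
  constructor
  · intro p hp
    rw [Finset.mem_filter] at hp ⊢
    exact ⟨hp.1, hp.2.trans hxy.le⟩
  · intro hsub
    refine absurd (le_iff_JJ.2 fun p hp hpy => ?_) (not_le_of_gt hxy)
    have := hsub (Finset.mem_filter.2 ⟨hp, hpy⟩)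
    exact (Finset.mem_filter.1 this).2

lemma rk_le_card (x : L) : rk x ≤ (JJ L).card := Finset.card_le_card (Finset.filter_subset _ _)

lemma rk_top : rk (⊤ : L) = (JJ L).card := by
  unfold rk; congr 1; apply Finset.filter_true_of_mem; intro p _; exact le_top

lemma rk_bot : rk (⊥ : L) = 0 := by
  unfold rk
  rw [Finset.card_eq_zero, Finset.filter_eq_empty_iff]
  intro p hp hple
  exact (mem_JJ.1 hp).ne_bot (le_bot_iff.1 hple)

lemma covby_insert {x y : L} (h : x ⋖ y) :
    ∃ p ∈ JJ L, p ∉ (JJ L).filter (· ≤ x) ∧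
      (JJ L).filter (· ≤ y) = insert p ((JJ L).filter (· ≤ x)) := by
  have hne : ∃ p ∈ JJ L, p ≤ y ∧ ¬ p ≤ x := by
    by_contra hc
    push_neg at hc
    exact absurd (le_iff_JJ.2 fun p hp hpy => hc p hp hpy) (not_le_of_gt h.lt)
  obtain ⟨p, hp, hpy, hpx⟩ := hne
  have key : ∀ q ∈ JJ L, q ≤ y → ¬ q ≤ x → q = p := by
    intro q hq hqy hqx
    have hxq : x ⊔ q = y := by
      have h1 : x < x ⊔ q := lt_of_le_of_ne le_sup_left (by
        intro he; exact hqx (le_sup_right.trans he.symm.le))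
      have h2 : x ⊔ q ≤ y := sup_le h.lt.le hqy
      by_contra h3
      exact h.2 h1 (lt_of_le_of_ne h2 h3)
    have hple : p ≤ q := by
      have := (mem_JJ.1 hp).supPrime.le_sup (b := x) (c := q)
      rcases this.1 (hxq ▸ hpy) with h' | h'
      · exact absurd h' hpx
      · exact h'
    have hqle : q ≤ p := by
      have hxp : x ⊔ p = y := by
        have h1 : x < x ⊔ p := lt_of_le_of_ne le_sup_left (by
          intro he; exact hpx (le_sup_right.trans he.symm.le))
        have h2 : x ⊔ p ≤ y := sup_le h.lt.le hpy
        by_contra h3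
        exact h.2 h1 (lt_of_le_of_ne h2 h3)
      rcases ((mem_JJ.1 hq).supPrime.le_sup (b := x) (c := p)).1 (hxp ▸ hqy) with h' | h'
      · exact absurd h' hqx
      · exact h'
    exact le_antisymm hqle hple ▸ rfl
  refine ⟨p, hp, by simp [hpx], ?_⟩
  ext q
  simp only [Finset.mem_insert, Finset.mem_filter]
  constructor
  · rintro ⟨hq, hqy⟩
    by_cases hqx : q ≤ x
    · exact Or.inr ⟨hq, hqx⟩
    · exact Or.inl (key q hq hqy hqx)
  · rintro (rfl | ⟨hq, hqx⟩)
    · exact ⟨hp, hpy⟩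
    · exact ⟨hq, hqx.trans h.lt.le⟩

lemma rk_covby {x y : L} (h : x ⋖ y) : rk y = rk x + 1 := by
  obtain ⟨p, hp, hpx, heq⟩ := covby_insert h
  unfold rk
  rw [heq, Finset.card_insert_of_notMem hpx]


lemma strictMono_snoc {m : ℕ} {α : Type*} [Preorder α] (f : Fin (m + 1) → α) (a : α)
    (hf : StrictMono f) (ha : f (Fin.last m) < a) : StrictMono (Fin.snoc f a) := by
  intro i j hij
  rcases Fin.eq_castSucc_or_eq_last j with ⟨j', rfl⟩ | rfl
  · rcases Fin.eq_castSucc_or_eq_last i with ⟨i', rfl⟩ | rfl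
    · rw [Fin.snoc_castSucc, Fin.snoc_castSucc]
      exact hf (Fin.castSucc_lt_castSucc_iff.1 hij)
    · exact absurd hij (by simp [Fin.lt_iff_val_lt_val])
  · rcases Fin.eq_castSucc_or_eq_last i with ⟨i', rfl⟩ | rfl
    · rw [Fin.snoc_castSucc, Fin.snoc_last]
      exact lt_of_le_of_lt (hf.monotone (Fin.le_last i')) ha
    · exact absurd hij (lt_irrefl _)

lemma exists_chain_to (x : L) :
    ∃ ch : Fin (rk x + 1) → L, StrictMono ch ∧ ch (Fin.last _) = x := by
  induction x using WellFoundedLT.induction with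
  | _ x ih =>
  by_cases hx : x = ⊥
  · subst hx
    refine ⟨fun _ => ⊥, fun i j hij => ?_, rfl⟩
    have h1 : (i : ℕ) < j := hij
    have h2 : (j : ℕ) < rk (⊥ : L) + 1 := j.2
    have h3 := rk_bot (L := L)
    omega
  · obtain ⟨y, hy, hmax⟩ := Finset.exists_maximal (s := Finset.univ.filter (· < x))
      ⟨⊥, Finset.mem_filter.2 ⟨Finset.mem_univ _, bot_lt_iff_ne_bot.2 hx⟩⟩
    have hylt : y < x := (Finset.mem_filter.1 hy).2
    have hcov : y ⋖ x := ⟨hylt, fun z hz1 hz2 =>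
      not_le_of_gt hz1 (hmax (Finset.mem_filter.2 ⟨Finset.mem_univ _, hz2⟩) hz1.le)⟩
    obtain ⟨ch, hch, hlast⟩ := ih y hylt
    rw [rk_covby hcov]
    exact ⟨Fin.snoc ch x, strictMono_snoc ch x hch (by rw [hlast]; exact hylt), by simp⟩

lemma latLength_eq_of {P : Type} [PartialOrder P] (ρ : P → ℕ) (hρ : StrictMono ρ) (N : ℕ)
    (hb : ∀ z, ρ z ≤ N) (hch : ∃ ch : Fin (N + 1) → P, StrictMono ch) :
    latLength P = N := by
  have hub : ∀ m ∈ {n : ℕ | ∃ f : Fin (n + 1) → P, StrictMono f}, m ≤ N := by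
    rintro m ⟨f, hf⟩
    have hinj : Function.Injective (fun i : Fin (m + 1) => ρ (f i)) := (hρ.comp hf).injective
    have hsub : (Finset.univ.image fun i : Fin (m + 1) => ρ (f i)) ⊆ Finset.range (N + 1) := by
      intro t ht
      obtain ⟨i, _, rfl⟩ := Finset.mem_image.1 ht
      exact Finset.mem_range.2 (Nat.lt_succ_of_le (hb _))
    have hc := Finset.card_le_card hsub
    rwa [Finset.card_image_of_injective _ hinj, Finset.card_univ, Fintype.card_fin,
      Finset.card_range, Nat.succ_le_succ_iff] at hc
  exact le_antisymm (csSup_le ⟨N, hch⟩ hub) (le_csSup ⟨N, hub⟩ hch)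


lemma dimSet_nonempty : Nonempty (L ↪o (Fin (JJ L).card → ℕ)) := by
  let e : Fin (JJ L).card → L := fun i => ((JJ L).equivFin.symm i : L)
  have he : ∀ p (hp : p ∈ JJ L), e ((JJ L).equivFin ⟨p, hp⟩) = p := by
    intro p hp; simp [e]
  refine ⟨OrderEmbedding.ofMapLEIff (fun x i => if e i ≤ x then 1 else 0) fun x y => ?_⟩
  constructor
  · intro h
    refine le_iff_JJ.2 fun p hp hpx => ?_
    have h2 := h ((JJ L).equivFin ⟨p, hp⟩)
    simp only [he p hp] at h2
    by_contra hpy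
    rw [if_pos hpx, if_neg hpy] at h2
    omega
  · intro h i
    by_cases hix : e i ≤ x
    · simp [if_pos hix, if_pos (hix.trans h)]
    · simp [hix]

lemma exists_chain_partition [Nontrivial L] {n : ℕ} (g : L ↪o (Fin n → ℕ))
    (hn : n ≤ (JJ L).card) :
    ∃ c : L → Fin n, (∀ p q, p ∈ JJ L → q ∈ JJ L → c p = c q → p ≤ q ∨ q ≤ p) ∧
      (∀ i, ∃ p ∈ JJ L, c p = i) := by
  have hn1 : 0 < n := by
    rcases Nat.eq_zero_or_pos n with rfl | h
    · obtain ⟨a, b, hab⟩ := exists_pair_ne L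
      exact absurd (g.injective (funext fun i => i.elim0)) hab
    · exact h
  have hex : ∀ p : L, ∃ i : Fin n, p ∈ JJ L → g (MM p) i < g p i := by
    intro p
    by_cases hp : p ∈ JJ L
    · have h1 : ¬ g p ≤ g (MM p) := fun h => not_le_MM hp (g.le_iff_le.1 h)
      rw [Pi.le_def] at h1
      push_neg at h1
      obtain ⟨i, hi⟩ := h1
      exact ⟨i, fun _ => hi⟩
    · exact ⟨⟨0, hn1⟩, fun h => absurd h hp⟩
  choose col hcol using hex
  have hchain : ∀ (c : L → Fin n), (∀ p ∈ JJ L, c p = col p) →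
      ∀ p q, p ∈ JJ L → q ∈ JJ L → c p = c q → p ≤ q ∨ q ≤ p := by
    intro c hc p q hp hq hpq
    by_contra hcon
    push_neg at hcon
    obtain ⟨h1, h2⟩ := hcon
    have hqM : q ≤ MM p := le_MM h1
    have hpM : p ≤ MM q := le_MM h2
    have ht : col p = col q := by rw [← hc p hp, ← hc q hq, hpq]
    have e1 : g q (col p) < g p (col p) :=
      lt_of_le_of_lt (g.monotone hqM (col p)) (hcol p hp)
    have e2 : g p (col q) < g q (col q) :=
      lt_of_le_of_lt (g.monotone hpM (col q)) (hcol q hq)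
    rw [ht] at e1
    omega
  -- rebalancing
  have main : ∀ m (c : L → Fin n),
      (∀ p q, p ∈ JJ L → q ∈ JJ L → c p = c q → p ≤ q ∨ q ≤ p) →
      ((Finset.univ.filter fun i => (JJ L).filter (fun p => c p = i) = ∅).card ≤ m) →
      ∃ c' : L → Fin n, (∀ p q, p ∈ JJ L → q ∈ JJ L → c' p = c' q → p ≤ q ∨ q ≤ p) ∧
        (∀ i, ∃ p ∈ JJ L, c' p = i) := by
    intro m
    induction m with
    | zero =>
      intro c hc hcard
      refine ⟨c, hc, fun i => ?_⟩
      have hne : (JJ L).filter (fun p => c p = i) ≠ ∅ := by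
        intro he
        have : i ∈ Finset.univ.filter fun i => (JJ L).filter (fun p => c p = i) = ∅ :=
          Finset.mem_filter.2 ⟨Finset.mem_univ _, he⟩
        have := Finset.card_pos.2 ⟨i, this⟩
        omega
      obtain ⟨p, hp⟩ := Finset.nonempty_of_ne_empty hne
      exact ⟨p, (Finset.mem_filter.1 hp).1, (Finset.mem_filter.1 hp).2⟩
    | succ m ih =>
      intro c hc hcard
      set E := Finset.univ.filter fun i => (JJ L).filter (fun p => c p = i) = ∅ with hE
      by_cases hEe : E = ∅
      · refine ⟨c, hc, fun i => ?_⟩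
        have hne : (JJ L).filter (fun p => c p = i) ≠ ∅ := by
          intro he
          have : i ∈ E := Finset.mem_filter.2 ⟨Finset.mem_univ _, he⟩
          rw [hEe] at this
          exact absurd this (Finset.notMem_empty i)
        obtain ⟨p, hp⟩ := Finset.nonempty_of_ne_empty hne
        exact ⟨p, (Finset.mem_filter.1 hp).1, (Finset.mem_filter.1 hp).2⟩
      · obtain ⟨i0, hi0⟩ := Finset.nonempty_of_ne_empty hEe
        have hi0e : (JJ L).filter (fun p => c p = i0) = ∅ := (Finset.mem_filter.1 hi0).2
        have hsum : (JJ L).card = ∑ i ∈ Finset.univ, ((JJ L).filter (fun p => c p = i)).card :=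
          Finset.card_eq_sum_card_fiberwise (fun p _ => Finset.mem_univ _)
        have hbig : ∃ j, 2 ≤ ((JJ L).filter (fun p => c p = j)).card := by
          by_contra hb
          push_neg at hb
          have h1 : ∑ i ∈ Finset.univ, ((JJ L).filter (fun p => c p = i)).card
              = ∑ i ∈ Finset.univ.erase i0, ((JJ L).filter (fun p => c p = i)).card := by
            rw [Finset.sum_erase]
            rw [hi0e]
            simp
          have h2 : ∑ i ∈ Finset.univ.erase i0, ((JJ L).filter (fun p => c p = i)).card
              ≤ ∑ _i ∈ Finset.univ.erase i0, 1 :=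
            Finset.sum_le_sum (fun i _ => Nat.lt_succ_iff.1 (hb i))
          rw [Finset.sum_const, smul_eq_mul, mul_one,
            Finset.card_erase_of_mem (Finset.mem_univ _)] at h2
          simp only [Finset.card_univ, Fintype.card_fin] at h2
          omega
        obtain ⟨j, hj2⟩ := hbig
        obtain ⟨x, hx, b, hb, hxb⟩ := Finset.one_lt_card.1 hj2
        have hxJ : x ∈ JJ L := (Finset.mem_filter.1 hx).1
        have hcx : c x = j := (Finset.mem_filter.1 hx).2
        have hbJ : b ∈ JJ L := (Finset.mem_filter.1 hb).1
        have hcb : c b = j := (Finset.mem_filter.1 hb).2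
        set c' : L → Fin n := fun p => if p = x then i0 else c p with hc'
        have hchain' : ∀ p q, p ∈ JJ L → q ∈ JJ L → c' p = c' q → p ≤ q ∨ q ≤ p := by
          intro p q hp hq hpq
          by_cases hpx : p = x <;> by_cases hqx : q = x
          · subst hpx; subst hqx; exact Or.inl le_rfl
          · exfalso
            rw [hc'] at hpq
            simp only [if_pos hpx, if_neg hqx] at hpq
            have : q ∈ (JJ L).filter (fun p => c p = i0) :=
              Finset.mem_filter.2 ⟨hq, hpq.symm⟩
            rw [hi0e] at this
            exact absurd this (Finset.notMem_empty q)
          · exfalso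
            rw [hc'] at hpq
            simp only [if_pos hqx, if_neg hpx] at hpq
            have : p ∈ (JJ L).filter (fun p => c p = i0) :=
              Finset.mem_filter.2 ⟨hp, hpq⟩
            rw [hi0e] at this
            exact absurd this (Finset.notMem_empty p)
          · rw [hc'] at hpq
            simp only [if_neg hpx, if_neg hqx] at hpq
            exact hc p q hp hq hpq
        have hsub : (Finset.univ.filter fun i => (JJ L).filter (fun p => c' p = i) = ∅)
            ⊆ E.erase i0 := by
          intro i hi
          have hempty : (JJ L).filter (fun p => c' p = i) = ∅ := (Finset.mem_filter.1 hi).2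
          rw [Finset.eq_empty_iff_forall_notMem] at hempty
          rw [Finset.mem_erase]
          constructor
          · intro hii0
            subst hii0
            exact hempty x (Finset.mem_filter.2 ⟨hxJ, by simp [hc']⟩)
          · rw [hE, Finset.mem_filter]
            refine ⟨Finset.mem_univ _, ?_⟩
            rw [Finset.eq_empty_iff_forall_notMem]
            intro p hp
            obtain ⟨hpJ, hpc⟩ := Finset.mem_filter.1 hp
            by_cases hpx : p = x
            · refine hempty b (Finset.mem_filter.2 ⟨hbJ, ?_⟩)
              rw [hc']
              simp only [if_neg (show b ≠ x from fun h => hxb h.symm)]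
              rw [hcb, ← hcx, ← hpx]
              exact hpc
            · exact hempty p (Finset.mem_filter.2 ⟨hpJ, by
                rw [hc']; simp only [if_neg hpx]; exact hpc⟩)
        refine ih c' hchain' ?_
        have := Finset.card_le_card hsub
        rw [Finset.card_erase_of_mem hi0] at this
        omega
  exact main (Finset.univ.filter fun i => (JJ L).filter (fun p => col p = i) = ∅).card
    col (hchain col (fun p _ => rfl)) le_rfl


lemma fin_val_sup {m : ℕ} (a b : Fin m) : ((a ⊔ b) : Fin m).val = max a.val b.val := rfl
lemma fin_val_inf {m : ℕ} (a b : Fin m) : ((a ⊓ b) : Fin m).val = min a.val b.val := rfl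

section Construction

variable {n : ℕ} (c : L → Fin n)

noncomputable def Fib (i : Fin n) : Finset L := (JJ L).filter (fun p => c p = i)

noncomputable def SS (x : L) (i : Fin n) : Finset L := (Fib c i).filter (fun p => p ≤ x)

noncomputable def kk (i : Fin n) : ℕ := (Fib c i).card - 1

lemma SS_card_lt (x : L) (i : Fin n) : (SS c x i).card < kk c i + 2 := by
  have h1 : (SS c x i).card ≤ (Fib c i).card := Finset.card_le_card (Finset.filter_subset _ _)
  unfold kk
  omega

lemma mem_SS {x p : L} {i : Fin n} :
    p ∈ SS c x i ↔ p ∈ JJ L ∧ c p = i ∧ p ≤ x := by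
  simp [SS, Fib, and_assoc]

lemma SS_mono {x y : L} (h : x ≤ y) (i : Fin n) : SS c x i ⊆ SS c y i := by
  intro p hp
  rw [mem_SS] at hp ⊢
  exact ⟨hp.1, hp.2.1, hp.2.2.trans h⟩

lemma SS_total (hch : ∀ p q, p ∈ JJ L → q ∈ JJ L → c p = c q → p ≤ q ∨ q ≤ p)
    (x y : L) (i : Fin n) : SS c x i ⊆ SS c y i ∨ SS c y i ⊆ SS c x i := by
  by_contra h
  push_neg at h
  obtain ⟨a, ha, hay⟩ := Finset.not_subset.1 h.1
  obtain ⟨b, hb, hbx⟩ := Finset.not_subset.1 h.2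
  rw [mem_SS] at ha hb
  rcases hch a b ha.1 hb.1 (ha.2.1.trans hb.2.1.symm) with hab | hba
  · exact hay (mem_SS c |>.2 ⟨ha.1, ha.2.1, hab.trans hb.2.2⟩)
  · exact hbx (mem_SS c |>.2 ⟨hb.1, hb.2.1, hba.trans ha.2.2⟩)

lemma SS_sup (x y : L) (i : Fin n) : SS c (x ⊔ y) i = SS c x i ∪ SS c y i := by
  ext p
  simp only [mem_SS, Finset.mem_union]
  constructor
  · rintro ⟨hp, hc, hle⟩
    rcases ((mem_JJ.1 hp).supPrime.le_sup).1 hle with h | h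
    · exact Or.inl ⟨hp, hc, h⟩
    · exact Or.inr ⟨hp, hc, h⟩
  · rintro (⟨hp, hc, hle⟩ | ⟨hp, hc, hle⟩)
    · exact ⟨hp, hc, hle.trans le_sup_left⟩
    · exact ⟨hp, hc, hle.trans le_sup_right⟩

lemma SS_inf (x y : L) (i : Fin n) : SS c (x ⊓ y) i = SS c x i ∩ SS c y i := by
  ext p
  simp only [mem_SS, Finset.mem_inter, le_inf_iff]
  tauto

/-- The embedding map. -/
noncomputable def ff (x : L) : ∀ i : Fin n, Fin (kk c i + 2) :=
  fun i => ⟨(SS c x i).card, SS_card_lt c x i⟩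

lemma ff_sup (hch : ∀ p q, p ∈ JJ L → q ∈ JJ L → c p = c q → p ≤ q ∨ q ≤ p) (x y : L) :
    ff c (x ⊔ y) = ff c x ⊔ ff c y := by
  funext i
  rw [Pi.sup_apply]
  apply Fin.ext
  rw [fin_val_sup]
  show (SS c (x ⊔ y) i).card = max (SS c x i).card (SS c y i).card
  rw [SS_sup]
  rcases SS_total c hch x y i with h | h
  · rw [Finset.union_eq_right.2 h, max_eq_right (Finset.card_le_card h)]
  · rw [Finset.union_eq_left.2 h, max_eq_left (Finset.card_le_card h)]

lemma ff_inf (hch : ∀ p q, p ∈ JJ L → q ∈ JJ L → c p = c q → p ≤ q ∨ q ≤ p) (x y : L) :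
    ff c (x ⊓ y) = ff c x ⊓ ff c y := by
  funext i
  rw [Pi.inf_apply]
  apply Fin.ext
  rw [fin_val_inf]
  show (SS c (x ⊓ y) i).card = min (SS c x i).card (SS c y i).card
  rw [SS_inf]
  rcases SS_total c hch x y i with h | h
  · rw [Finset.inter_eq_left.2 h, min_eq_left (Finset.card_le_card h)]
  · rw [Finset.inter_eq_right.2 h, min_eq_right (Finset.card_le_card h)]

lemma ff_injective (hch : ∀ p q, p ∈ JJ L → q ∈ JJ L → c p = c q → p ≤ q ∨ q ≤ p) :
    Function.Injective (ff c) := by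
  intro x y hxy
  have hSS : ∀ i, SS c x i = SS c y i := by
    intro i
    have hcard : (SS c x i).card = (SS c y i).card := by
      have := congrFun hxy i
      exact congrArg Fin.val this
    rcases SS_total c hch x y i with h | h
    · exact Finset.eq_of_subset_of_card_le h (le_of_eq hcard.symm)
    · exact (Finset.eq_of_subset_of_card_le h (le_of_eq hcard)).symm
  apply le_antisymm
  · refine le_iff_JJ.2 fun p hp hpx => ?_
    have : p ∈ SS c y (c p) := hSS (c p) ▸ (mem_SS c).2 ⟨hp, rfl, hpx⟩
    exact ((mem_SS c).1 this).2.2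
  · refine le_iff_JJ.2 fun p hp hpy => ?_
    have : p ∈ SS c x (c p) := (hSS (c p)).symm ▸ (mem_SS c).2 ⟨hp, rfl, hpy⟩
    exact ((mem_SS c).1 this).2.2

lemma ff_bot : ff c (⊥ : L) = ⊥ := by
  funext i
  apply Fin.ext
  show (SS c ⊥ i).card = ((⊥ : ∀ i : Fin n, Fin (kk c i + 2)) i).val
  have h1 : SS c ⊥ i = ∅ := by
    rw [Finset.eq_empty_iff_forall_notMem]
    intro p hp
    rw [mem_SS] at hp
    exact (mem_JJ.1 hp.1).ne_bot (le_bot_iff.1 hp.2.2)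
  rw [h1]
  rfl

lemma ff_top (hsurj : ∀ i, ∃ p ∈ JJ L, c p = i) : ff c (⊤ : L) = ⊤ := by
  funext i
  apply Fin.ext
  show (SS c ⊤ i).card = ((⊤ : ∀ i : Fin n, Fin (kk c i + 2)) i).val
  have h1 : SS c ⊤ i = Fib c i := by
    unfold SS
    apply Finset.filter_true_of_mem
    intro p _
    exact le_top
  have h2 : (Fib c i).Nonempty := by
    obtain ⟨p, hp, hcp⟩ := hsurj i
    exact ⟨p, Finset.mem_filter.2 ⟨hp, hcp⟩⟩
  have h3 : 1 ≤ (Fib c i).card := Finset.card_pos.2 h2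
  have h4 : ((⊤ : ∀ i : Fin n, Fin (kk c i + 2)) i).val = kk c i + 1 := rfl
  rw [h1, h4]
  unfold kk
  omega

lemma ff_covby {x y : L} (h : x ⋖ y) : ff c x ⋖ ff c y := by
  obtain ⟨p, hpJ, hpx, heq⟩ := covby_insert h
  have hpnx : ¬ p ≤ x := fun hc => hpx (Finset.mem_filter.2 ⟨hpJ, hc⟩)
  have hpy : p ≤ y := by
    have h2 : p ∈ (JJ L).filter (· ≤ y) := by rw [heq]; exact Finset.mem_insert_self _ _
    exact (Finset.mem_filter.1 h2).2
  have hSSy : ∀ i, SS c y i = if c p = i then insert p (SS c x i) else SS c x i := by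
    intro i
    ext q
    rw [mem_SS]
    by_cases hci : c p = i
    · rw [if_pos hci, Finset.mem_insert, mem_SS]
      constructor
      · rintro ⟨hq, hqc, hqy⟩
        have : q ∈ insert p ((JJ L).filter (· ≤ x)) := heq ▸ Finset.mem_filter.2 ⟨hq, hqy⟩
        rcases Finset.mem_insert.1 this with rfl | hmem
        · exact Or.inl rfl
        · exact Or.inr ⟨hq, hqc, (Finset.mem_filter.1 hmem).2⟩
      · rintro (rfl | ⟨hq, hqc, hqx⟩)
        · exact ⟨hpJ, hci, hpy⟩
        · exact ⟨hq, hqc, hqx.trans h.lt.le⟩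
    · rw [if_neg hci, mem_SS]
      constructor
      · rintro ⟨hq, hqc, hqy⟩
        have : q ∈ insert p ((JJ L).filter (· ≤ x)) := heq ▸ Finset.mem_filter.2 ⟨hq, hqy⟩
        rcases Finset.mem_insert.1 this with rfl | hmem
        · exact absurd hqc hci
        · exact ⟨hq, hqc, (Finset.mem_filter.1 hmem).2⟩
      · rintro ⟨hq, hqc, hqx⟩
        exact ⟨hq, hqc, hqx.trans h.lt.le⟩
  have hvx : ∀ i, (ff c y i).val = if c p = i then (ff c x i).val + 1 else (ff c x i).val := by
    intro i
    show (SS c y i).card = _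
    rw [hSSy i]
    by_cases hci : c p = i
    · rw [if_pos hci, if_pos hci, Finset.card_insert_of_notMem]
      · rfl
      · intro hmem
        exact hpnx ((mem_SS c).1 hmem).2.2
    · rw [if_neg hci, if_neg hci]
      rfl
  constructor
  · apply lt_of_le_of_ne
    · intro i
      rw [Fin.le_def, hvx i]
      split <;> omega
    · intro he
      have h2 := congrArg Fin.val (congrFun he (c p))
      rw [hvx (c p), if_pos rfl] at h2
      omega
  · intro z h1 h2
    have hle1 : ∀ i, (ff c x i).val ≤ (z i).val := fun i => Fin.le_def.1 (h1.le i)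
    have hle2 : ∀ i, (z i).val ≤ (ff c y i).val := fun i => Fin.le_def.1 (h2.le i)
    have hcases : z = ff c x ∨ z = ff c y := by
      by_cases hz : (z (c p)).val = (ff c x (c p)).val
      · left
        funext i
        apply Fin.ext
        by_cases hci : c p = i
        · exact hci ▸ hz
        · have hv := hvx i
          rw [if_neg hci] at hv
          have := hle1 i
          have := hle2 i
          omega
      · right
        funext i
        apply Fin.ext
        by_cases hci : c p = i
        · have hv := hvx i
          rw [if_pos hci] at hv
          have h3 := hle1 i
          have h4 := hle2 i
          have h5 : (z (c p)).val = (z i).val := by rw [hci]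
          have h6 : (ff c x (c p)).val = (ff c x i).val := by rw [hci]
          omega
        · have hv := hvx i
          rw [if_neg hci] at hv
          have := hle1 i
          have := hle2 i
          omega
    rcases hcases with rfl | rfl
    · exact absurd h1 (lt_irrefl _)
    · exact absurd h2 (lt_irrefl _)

end Construction

end Aux

/-- Every nontrivial finite distributive lattice `L` of order dimension
`n` admits a cover-preserving `{0,1}`-lattice embedding into a product of `n`
nontrivial finite chains of the same length as `L`. -/
theorem statement9 (L : Type) [DistribLattice L] [Fintype L] [BoundedOrder L]
    [Nontrivial L] (n : ℕ) (hdim : orderDim L = n) :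
    ∃ k : Fin n → ℕ, ∃ f : LatticeHom L (∀ i, Fin (k i + 2)),
      Function.Injective f ∧ f ⊥ = ⊥ ∧ f ⊤ = ⊤ ∧
      (∀ x y : L, x ⋖ y → f x ⋖ f y) ∧
      latLength L = latLength (∀ i, Fin (k i + 2)) := by

  classical
  unfold orderDim at hdim
  have hmem : (JJ L).card ∈ {m : ℕ | Nonempty (L ↪o (Fin m → ℕ))} := dimSet_nonempty
  have hne : {m : ℕ | Nonempty (L ↪o (Fin m → ℕ))}.Nonempty := ⟨_, hmem⟩
  have hn_le : n ≤ (JJ L).card := by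
    rw [← hdim]
    exact Nat.sInf_le hmem
  have hgmem : Nonempty (L ↪o (Fin n → ℕ)) := by
    have h := Nat.sInf_mem hne
    rwa [hdim] at h
  obtain ⟨g⟩ := hgmem
  obtain ⟨c, hch, hsurj⟩ := exists_chain_partition g hn_le
  have hFibcard : ∀ i, (Fib c i).card = kk c i + 1 := by
    intro i
    obtain ⟨p, hp, hcp⟩ := hsurj i
    have h1 : 1 ≤ (Fib c i).card :=
      Finset.card_pos.2 ⟨p, Finset.mem_filter.2 ⟨hp, hcp⟩⟩
    unfold kk
    omega
  have hcardsum : ∑ i, (kk c i + 1) = (JJ L).card := by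
    have hsum : (JJ L).card = ∑ i ∈ Finset.univ, (Fib c i).card :=
      Finset.card_eq_sum_card_fiberwise (fun p _ => Finset.mem_univ (c p))
    rw [hsum]
    exact (Finset.sum_congr rfl fun i _ => hFibcard i).symm
  have hmono : Monotone (ff c) := by
    intro x y hxy i
    rw [Fin.le_def]
    exact Finset.card_le_card (SS_mono c hxy i)
  have hchainL : ∃ ch : Fin ((JJ L).card + 1) → L, StrictMono ch := by
    have h := exists_chain_to (⊤ : L)
    rw [rk_top] at h
    obtain ⟨ch, hc1, _⟩ := h
    exact ⟨ch, hc1⟩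
  have hL : latLength L = (JJ L).card :=
    latLength_eq_of rk rk_strictMono _ rk_le_card hchainL
  have hstrict : StrictMono (ff c) := fun x y hxy =>
    lt_of_le_of_ne (hmono hxy.le) (fun he => hxy.ne (ff_injective c hch he))
  have hP : latLength (∀ i, Fin (kk c i + 2)) = ∑ i, (kk c i + 1) := by
    apply latLength_eq_of (fun z => ∑ i, (z i).val)
    · intro z w hzw
      obtain ⟨hle, j, hj⟩ := Pi.lt_def.1 hzw
      exact Finset.sum_lt_sum (fun i _ => Fin.le_def.1 (hle i))
        ⟨j, Finset.mem_univ j, Fin.lt_def.1 hj⟩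
    · intro z
      exact Finset.sum_le_sum fun i _ => Nat.lt_succ_iff.1 (z i).2
    · obtain ⟨ch, hc1⟩ := hchainL
      have hcast : ∑ i, (kk c i + 1) + 1 = (JJ L).card + 1 := by rw [hcardsum]
      rw [hcast]
      exact ⟨fun j => ff c (ch j), hstrict.comp hc1⟩
  refine ⟨kk c, ⟨⟨ff c, ff_sup c hch⟩, ff_inf c hch⟩,
    ff_injective c hch, ff_bot c, ff_top c hsurj, fun x y h => ff_covby c h, ?_⟩
  rw [hL, hP, hcardsum]
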